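/- For any connected graph G and any good system of categories S (i.e., a family of connected vertex subsets such that for every pair of distinct vertices s, t there is a neighbor u of s with d(u,t) < d(s,t), where d(x,t) = |{C ∈ S : t ∈ C, x ∉ C}|), the membership dimension of S (the maximum over vertices v of the number of categories containing v) is at least diam(G). -/
import Mathlib


open Finset SimpleGraph

variable {V : Type*}

def catDist [DecidableEq V] (S : Finset (Finset V)) (s t : V) : ℕ :=
  (S.filter fun C => t ∈ C ∧ s ∉ C).card

def IsGoodSystem [DecidableEq V] (G : SimpleGraph V) (S : Finset (Finset V)) : Prop :=
  (∀ C ∈ S, (G.induce (C : Set V)).Connected) ∧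
    ∀ s t : V, s ≠ t → ∃ u, G.Adj s u ∧ catDist S u t < catDist S s t

def memdim [DecidableEq V] [Fintype V] (S : Finset (Finset V)) : ℕ :=
  univ.sup fun v : V => (S.filter fun C => v ∈ C).card

noncomputable def graphDiam [Fintype V] (G : SimpleGraph V) : ℕ :=
  univ.sup fun p : V × V => G.dist p.1 p.2

noncomputable def minMemdim (V : Type*) [DecidableEq V] [Fintype V] (G : SimpleGraph V) : ℕ :=
  sInf {m | ∃ S : Finset (Finset V), IsGoodSystem G S ∧ memdim S = m}

theorem stmt0 [Fintype V] [DecidableEq V] (G : SimpleGraph V) (hG : G.Connected)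
    (S : Finset (Finset V)) (hS : IsGoodSystem G S) :
    graphDiam G ≤ memdim S := by
  have dist_le : ∀ n (s t : V), catDist S s t = n → G.dist s t ≤ n := by
    intro n
    induction n using Nat.strong_induction_on with
    | _ n ih =>
      intro s t h
      by_cases hst : s = t
      · subst hst; simp [SimpleGraph.dist_self]
      · obtain ⟨u, hadj, hlt⟩ := hS.2 s t hst
        rw [h] at hlt
        have h1 : G.dist u t ≤ catDist S u t := ih _ hlt u t rfl
        have h2 : G.dist s t ≤ G.dist s u + G.dist u t := hG.dist_triangle
        have h3 : G.dist s u ≤ 1 := by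
          have := SimpleGraph.dist_le hadj.toWalk
          simpa using this
        omega
  apply Finset.sup_le
  intro p _
  have h1 : G.dist p.1 p.2 ≤ catDist S p.1 p.2 := dist_le _ p.1 p.2 rfl
  have h2 : catDist S p.1 p.2 ≤ (S.filter fun C => p.2 ∈ C).card := by
    apply Finset.card_le_card
    intro C hC
    simp only [Finset.mem_filter] at *
    tauto
  have h3 : (S.filter fun C => p.2 ∈ C).card ≤ memdim S :=
    Finset.le_sup (f := fun v : V => (S.filter fun C => v ∈ C).card) (Finset.mem_univ p.2)
  omega
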